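/- The 3-sun S_3 — the graph on vertices x_1, x_2, x_3, y_1, y_2, y_3 where {y_1, y_2, y_3} is a triangle and each x_i is adjacent exactly to y_{i} and y_{i+1} (indices mod 3) — is not a co-TT graph. -/
import Mathlib


/-- `G` is a co-TT (signed-interval) graph. -/
def IsCoTT {V : Type*} (G : SimpleGraph V) : Prop :=
  ∃ l r : V → ℝ, ∀ u v : V, u ≠ v → (G.Adj u v ↔ l u ≤ r v ∧ l v ≤ r u)

/-- The 3-sun `S₃`: vertices `x₁ = 0, x₂ = 1, x₃ = 2, y₁ = 3, y₂ = 4, y₃ = 5`;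
`{y₁, y₂, y₃}` is a triangle and each `x_i` is adjacent exactly to `y_i` and
`y_{i+1}` (indices mod 3). -/
def S3graph : SimpleGraph (Fin 6) := SimpleGraph.fromRel (fun a b =>
  (a = 3 ∧ b = 4) ∨ (a = 4 ∧ b = 5) ∨ (a = 5 ∧ b = 3) ∨
  (a = 0 ∧ b = 3) ∨ (a = 0 ∧ b = 4) ∨
  (a = 1 ∧ b = 4) ∨ (a = 1 ∧ b = 5) ∨
  (a = 2 ∧ b = 5) ∨ (a = 2 ∧ b = 3))

instance : DecidableRel S3graph.Adj := fun a b =>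
  decidable_of_iff _ (SimpleGraph.fromRel_adj _ a b).symm

theorem S3graph_not_isCoTT : ¬ IsCoTT S3graph := by
  rintro ⟨l, r, h⟩
  have h34 := (h 3 4 (by decide)).mp (by decide)
  have h45 := (h 4 5 (by decide)).mp (by decide)
  have h53 := (h 5 3 (by decide)).mp (by decide)
  have h03 := (h 0 3 (by decide)).mp (by decide)
  have h04 := (h 0 4 (by decide)).mp (by decide)
  have h14 := (h 1 4 (by decide)).mp (by decide)
  have h15 := (h 1 5 (by decide)).mp (by decide)
  have h25 := (h 2 5 (by decide)).mp (by decide)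
  have h23 := (h 2 3 (by decide)).mp (by decide)
  have n01 := mt (h 0 1 (by decide)).mpr (by decide)
  have n02 := mt (h 0 2 (by decide)).mpr (by decide)
  have n12 := mt (h 1 2 (by decide)).mpr (by decide)
  have n05 := mt (h 0 5 (by decide)).mpr (by decide)
  have n13 := mt (h 1 3 (by decide)).mpr (by decide)
  have n24 := mt (h 2 4 (by decide)).mpr (by decide)
  rw [not_and_or, not_le, not_le] at n01 n02 n12 n05 n13 n24
  obtain ⟨a1, a2⟩ := h34
  obtain ⟨b1, b2⟩ := h45
  obtain ⟨c1, c2⟩ := h53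
  obtain ⟨d1, d2⟩ := h03
  obtain ⟨e1, e2⟩ := h04
  obtain ⟨f1, f2⟩ := h14
  obtain ⟨g1, g2⟩ := h15
  obtain ⟨i1, i2⟩ := h25
  obtain ⟨j1, j2⟩ := h23
  rcases n01 with p1 | p1 <;> rcases n02 with p2 | p2 <;>
    rcases n12 with p3 | p3 <;> rcases n05 with p4 | p4 <;>
    rcases n13 with p5 | p5 <;> rcases n24 with p6 | p6 <;> linarith
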